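/- arXiv:2002.03212 — 3 statements merged into one kernel-verified Lean document; each statement's English description precedes it below -/
import Mathlib

section
/- Let A, B, C, D : GF(2)^n → GF(2) and φ satisfy B = A∘φ, C = B∘φ, D = C∘φ. If P₁ = A·C + B·D is an invariant of φ, then P₂ = A·B·C·D is also an invariant of φ. -/
theorem stmt_5 (n : ℕ) (φ : (Fin n → ZMod 2) → (Fin n → ZMod 2))
    (A B C D : (Fin n → ZMod 2) → ZMod 2)
    (hB : B = A ∘ φ) (hC : C = B ∘ φ) (hD : D = C ∘ φ)
    (h1 : ∀ x, (A * C + B * D) (φ x) = (A * C + B * D) x) :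
    ∀ x, (A * B * C * D) (φ x) = (A * B * C * D) x := by
  intro x
  have h := h1 x
  simp only [Pi.add_apply, Pi.mul_apply, hB, hC, hD, Function.comp_apply] at h ⊢
  set a := A x
  set b := A (φ x)
  set c := A (φ (φ x))
  set d := A (φ (φ (φ x)))
  set e := A (φ (φ (φ (φ x))))
  -- h : b * d + c * e = a * c + b * d, goal : b * c * d * e = a * b * c * d
  have hce : c * e = a * c := by
    linear_combination h
  linear_combination (b * d) * hce
end

section
/- Let A, B, C, D, E, F, G, H : GF(2)^n → GF(2) and φ : GF(2)^n → GF(2)^n satisfy the cycle relations B = A∘φ, C = B∘φ, D = C∘φ, F = E∘φ, G = F∘φ, H = G∘φ, and suppose D(φ(x)) = E(x) + u(x) and H(φ(x)) = A(x) + w(x) for some functions u, w : GF(2)^n → GF(2). If B(x)·C(x)·u(x) = 0 and F(x)·G(x)·w(x) = 0 for all x, then P = A·B·C·D·E·F·G·H is an invariant of φ. -/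
theorem stmt_12 (n : ℕ) (φ : (Fin n → ZMod 2) → (Fin n → ZMod 2))
    (A B C D E F G H u w : (Fin n → ZMod 2) → ZMod 2)
    (hB : B = A ∘ φ) (hC : C = B ∘ φ) (hD : D = C ∘ φ)
    (hF : F = E ∘ φ) (hG : G = F ∘ φ) (hH : H = G ∘ φ)
    (hDE : ∀ x, D (φ x) = E x + u x) (hHA : ∀ x, H (φ x) = A x + w x)
    (hu : ∀ x, B x * C x * u x = 0) (hw : ∀ x, F x * G x * w x = 0) :
    ∀ x, (A * B * C * D * E * F * G * H) (φ x) = (A * B * C * D * E * F * G * H) x := by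
  intro x
  simp only [Pi.mul_apply]
  rw [show A (φ x) = B x from by rw [hB]; rfl,
      show B (φ x) = C x from by rw [hC]; rfl,
      show C (φ x) = D x from by rw [hD]; rfl,
      hDE, show E (φ x) = F x from by rw [hF]; rfl,
      show F (φ x) = G x from by rw [hG]; rfl,
      show G (φ x) = H x from by rw [hH]; rfl,
      hHA]
  linear_combination (D x * F x * G x * H x * (A x + w x)) * hu x +
    (B x * C x * D x * E x * H x) * hw x
end

section
/- With the hypotheses of the eight-function cycle (B = A∘φ, C = B∘φ, D = C∘φ, F = E∘φ, G = F∘φ, H = G∘φ, D∘φ = E + u, H∘φ = A + w), the difference P(φ(x)) + P(x) for P = A·B·C·D·E·F·G·H equals B·C·D·F·G·H·(E·w + A·u + u·w) pointwise. -/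
theorem stmt_13 (n : ℕ) (φ : (Fin n → ZMod 2) → (Fin n → ZMod 2))
    (A B C D E F G H u w : (Fin n → ZMod 2) → ZMod 2)
    (hB : B = A ∘ φ) (hC : C = B ∘ φ) (hD : D = C ∘ φ)
    (hF : F = E ∘ φ) (hG : G = F ∘ φ) (hH : H = G ∘ φ)
    (hDE : ∀ x, D (φ x) = E x + u x) (hHA : ∀ x, H (φ x) = A x + w x) :
    ∀ x, (A * B * C * D * E * F * G * H) (φ x) + (A * B * C * D * E * F * G * H) x =
      B x * C x * D x * F x * G x * H x * (E x * w x + A x * u x + u x * w x) := by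
  intro x
  have h1 : A (φ x) = B x := by rw [hB]; rfl
  have h2 : B (φ x) = C x := by rw [hC]; rfl
  have h3 : C (φ x) = D x := by rw [hD]; rfl
  have h4 : E (φ x) = F x := by rw [hF]; rfl
  have h5 : F (φ x) = G x := by rw [hG]; rfl
  have h6 : G (φ x) = H x := by rw [hH]; rfl
  simp only [Pi.mul_apply, h1, h2, h3, h4, h5, h6, hDE x, hHA x]
  have : ∀ a : ZMod 2, a + a = 0 := by decide
  ring_nf
  linear_combination (C x * D x * F x * G x * H x * E x * A x) * this (B x)
end
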